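/- (Kummer-type congruence for v-adic multiple zeta star values.) Let e ≥ 1, r ≥ 1, and let (m_1,…,m_r), (l_1,…,l_r) ∈ ℤ_{≥0}^r satisfy m_i ≡ l_i mod (q^d − 1)·q^{(e−1)d} for all 1 ≤ i ≤ r. Then ζ_v⋆(−m_1,…,−m_r) ≡ ζ_v⋆(−l_1,…,−l_r) mod v^e in A, i.e., v^e divides ζ_v⋆(−m_1,…,−m_r) − ζ_v⋆(−l_1,…,−l_r). -/

import Mathlib

open Polynomial

/-- The power sum `S_i(-m)`: the sum of `n ^ m` over monic polynomials `n` of degree `i`. -/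
noncomputable def powerSum (F : Type*) [Field F] [Fintype F] (i m : ℕ) : Polynomial F :=
  ∑ᶠ n ∈ {n : Polynomial F | n.Monic ∧ n.natDegree = i}, n ^ m

/-- The restricted power sum `S̃_i(-m)`: the sum of `n ^ m` over monic polynomials `n` of
degree `i` not divisible by `v`. -/
noncomputable def powerSumV (F : Type*) [Field F] [Fintype F] (v : Polynomial F) (i m : ℕ) :
    Polynomial F :=
  ∑ᶠ n ∈ {n : Polynomial F | n.Monic ∧ n.natDegree = i ∧ ¬ v ∣ n}, n ^ m

/-- `ζ_∞(-m_1, …, -m_r)`, the ∞-adic multiple zeta value at nonpositive integers: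
the sum over `i_1 > ⋯ > i_r ≥ 0` of `S_{i_1}(-m_1) ⋯ S_{i_r}(-m_r)`.
Only `m 0, …, m (r-1)` are used.  The depth-0 value is `1`. -/
noncomputable def zetaInf (F : Type*) [Field F] [Fintype F] (r : ℕ) (m : ℕ → ℕ) :
    Polynomial F :=
  ∑ᶠ i ∈ {i : Fin r → ℕ | StrictAnti i}, ∏ j : Fin r, powerSum F (i j) (m (j : ℕ))

/-- `ζ⋆_∞(-m_1, …, -m_r)`, the ∞-adic multiple zeta star value at nonpositive integers:
the sum over `i_1 ≥ ⋯ ≥ i_r ≥ 0` of `S_{i_1}(-m_1) ⋯ S_{i_r}(-m_r)`. -/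
noncomputable def zetaInfStar (F : Type*) [Field F] [Fintype F] (r : ℕ) (m : ℕ → ℕ) :
    Polynomial F :=
  ∑ᶠ i ∈ {i : Fin r → ℕ | Antitone i}, ∏ j : Fin r, powerSum F (i j) (m (j : ℕ))

/-- `ζ_v(-m_1, …, -m_r)`, the v-adic multiple zeta value at nonpositive integers. -/
noncomputable def zetaV (F : Type*) [Field F] [Fintype F] (v : Polynomial F) (r : ℕ)
    (m : ℕ → ℕ) : Polynomial F :=
  ∑ᶠ i ∈ {i : Fin r → ℕ | StrictAnti i}, ∏ j : Fin r, powerSumV F v (i j) (m (j : ℕ))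

/-- `ζ⋆_v(-m_1, …, -m_r)`, the v-adic multiple zeta star value at nonpositive integers. -/
noncomputable def zetaVStar (F : Type*) [Field F] [Fintype F] (v : Polynomial F) (r : ℕ)
    (m : ℕ → ℕ) : Polynomial F :=
  ∑ᶠ i ∈ {i : Fin r → ℕ | Antitone i}, ∏ j : Fin r, powerSumV F v (i j) (m (j : ℕ))

/-- `ζ_{<d}(-m_1, …, -m_r)`, the truncated multiple zeta value:
the sum over `d > i_1 > ⋯ > i_r ≥ 0` of `S_{i_1}(-m_1) ⋯ S_{i_r}(-m_r)`. -/
noncomputable def zetaLt (F : Type*) [Field F] [Fintype F] (d r : ℕ) (m : ℕ → ℕ) :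
    Polynomial F :=
  ∑ᶠ i ∈ {i : Fin r → ℕ | StrictAnti i ∧ ∀ j, i j < d},
    ∏ j : Fin r, powerSum F (i j) (m (j : ℕ))

/-- `ζ⋆_{<d}(-m_1, …, -m_r)`, the truncated multiple zeta star value. -/
noncomputable def zetaLtStar (F : Type*) [Field F] [Fintype F] (d r : ℕ) (m : ℕ → ℕ) :
    Polynomial F :=
  ∑ᶠ i ∈ {i : Fin r → ℕ | Antitone i ∧ ∀ j, i j < d},
    ∏ j : Fin r, powerSum F (i j) (m (j : ℕ))

/-- `ζ_{<d}(-m)`, the depth-one truncated zeta value `Σ_{d > i ≥ 0} S_i(-m)`. -/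
noncomputable def zetaLtOne (F : Type*) [Field F] [Fintype F] (d m : ℕ) : Polynomial F :=
  ∑ᶠ i ∈ {i : ℕ | i < d}, powerSum F i m

section Aux

open Finset

variable (F : Type*) [Field F] [Fintype F]

lemma natDegreeLe_finite (i : ℕ) : {n : Polynomial F | n.natDegree ≤ i}.Finite := by
  apply Set.Finite.of_finite_image (f := fun p => fun j : Fin (i + 1) => p.coeff (j : ℕ))
  · exact Set.toFinite _
  · intro p hp q hq hpq
    ext k
    by_cases hk : k ≤ i
    · exact congrFun hpq ⟨k, Nat.lt_succ_of_le hk⟩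
    · rw [Polynomial.coeff_eq_zero_of_natDegree_lt (lt_of_le_of_lt hp (by omega)),
        Polynomial.coeff_eq_zero_of_natDegree_lt (lt_of_le_of_lt hq (by omega))]

lemma monicSet_finite (i : ℕ) : {n : Polynomial F | n.Monic ∧ n.natDegree = i}.Finite :=
  (natDegreeLe_finite F i).subset fun n hn => le_of_eq hn.2

lemma monicSetV_finite (v : Polynomial F) (i : ℕ) :
    {n : Polynomial F | n.Monic ∧ n.natDegree = i ∧ ¬ v ∣ n}.Finite :=
  (natDegreeLe_finite F i).subset fun n hn => le_of_eq hn.2.1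

/-- The finset of monic polynomials of degree `i`. -/
noncomputable def MF (i : ℕ) : Finset (Polynomial F) := (monicSet_finite F i).toFinset

/-- The finset of monic polynomials of degree `i` not divisible by `v`. -/
noncomputable def MFV (v : Polynomial F) (i : ℕ) : Finset (Polynomial F) :=
  (monicSetV_finite F v i).toFinset

lemma mem_MF {i : ℕ} {n : Polynomial F} : n ∈ MF F i ↔ n.Monic ∧ n.natDegree = i := by
  simp [MF, Set.Finite.mem_toFinset, Set.mem_setOf_eq]

lemma mem_MFV {v : Polynomial F} {i : ℕ} {n : Polynomial F} :
    n ∈ MFV F v i ↔ n.Monic ∧ n.natDegree = i ∧ ¬ v ∣ n := by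
  simp [MFV, Set.Finite.mem_toFinset, Set.mem_setOf_eq]

lemma powerSum_eq (i m : ℕ) : powerSum F i m = ∑ n ∈ MF F i, n ^ m :=
  finsum_mem_eq_finite_toFinset_sum _ _

lemma powerSumV_eq (v : Polynomial F) (i m : ℕ) :
    powerSumV F v i m = ∑ n ∈ MFV F v i, n ^ m :=
  finsum_mem_eq_finite_toFinset_sum _ _

lemma sum_MF_succ (i : ℕ) (hi : 1 ≤ i) (f : Polynomial F → Polynomial F) :
    ∑ n ∈ MF F i, f n = ∑ g ∈ MF F (i - 1), ∑ c : F, f (Polynomial.X * g + Polynomial.C c) := by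
  rw [← Finset.sum_product']
  refine Finset.sum_bij' (fun n _ => (n.divX, n.coeff 0))
    (fun p _ => Polynomial.X * p.1 + Polynomial.C p.2) ?_ ?_ ?_ ?_ ?_
  · -- hi : divX lands in MF (i-1) × univ
    intro n hn
    rw [mem_MF] at hn
    obtain ⟨hmon, hdeg⟩ := hn
    rw [Finset.mem_product, mem_MF]
    refine ⟨⟨?_, ?_⟩, Finset.mem_univ _⟩
    · rw [Polynomial.Monic, Polynomial.leadingCoeff,
        Polynomial.natDegree_divX_eq_natDegree_tsub_one, hdeg, Polynomial.coeff_divX,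
        Nat.sub_add_cancel hi, ← hdeg]
      exact hmon.coeff_natDegree
    · rw [Polynomial.natDegree_divX_eq_natDegree_tsub_one, hdeg]
  · -- hj
    intro p hp
    rw [Finset.mem_product, mem_MF] at hp
    obtain ⟨⟨hmon, hdeg⟩, -⟩ := hp
    have hXg : (Polynomial.X * p.1).Monic := Polynomial.monic_X.mul hmon
    have hXgd : (Polynomial.X * p.1).natDegree = i := by
      rw [Polynomial.natDegree_mul Polynomial.X_ne_zero hmon.ne_zero,
        Polynomial.natDegree_X, hdeg]; omega
    have hlt : (Polynomial.C p.2).degree < (Polynomial.X * p.1).degree := by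
      refine lt_of_le_of_lt Polynomial.degree_C_le ?_
      rw [Polynomial.degree_eq_natDegree hXg.ne_zero, hXgd]
      exact_mod_cast Nat.lt_of_lt_of_le Nat.zero_lt_one hi
    rw [mem_MF]
    exact ⟨hXg.add_of_left hlt,
      (Polynomial.natDegree_eq_of_degree_eq
        (Polynomial.degree_add_eq_left_of_degree_lt hlt)).trans hXgd⟩
  · -- left_inv
    intro n hn
    exact Polynomial.X_mul_divX_add n
  · -- right_inv
    intro p hp
    have h0 : (Polynomial.X * p.1).coeff 0 = 0 := by
      rw [Polynomial.mul_coeff_zero, Polynomial.coeff_X_zero, zero_mul]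
    have hdX : (Polynomial.X * p.1 + Polynomial.C p.2).divX = p.1 := by
      rw [Polynomial.divX_add, Polynomial.divX_C, add_zero]
      ext k
      rw [Polynomial.coeff_divX, Polynomial.coeff_X_mul]
    have hc0 : (Polynomial.X * p.1 + Polynomial.C p.2).coeff 0 = p.2 := by
      rw [Polynomial.coeff_add, h0, Polynomial.coeff_C, if_pos rfl, zero_add]
    show ((Polynomial.X * p.1 + Polynomial.C p.2).divX,
      (Polynomial.X * p.1 + Polynomial.C p.2).coeff 0) = p
    rw [hdX, hc0]
  · intro n hn
    rw [Polynomial.X_mul_divX_add n]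

lemma powerSum_eq_zero (m i : ℕ) (h : m < i) : powerSum F i m = 0 := by
  induction m using Nat.strong_induction_on generalizing i with
  | _ m IH =>
    have hi : 1 ≤ i := by omega
    rw [powerSum_eq, sum_MF_succ F i hi]
    have expand : ∀ g ∈ MF F (i - 1), (∑ c : F, (Polynomial.X * g + Polynomial.C c) ^ m)
        = ∑ k ∈ Finset.range (m + 1),
            (Polynomial.X * g) ^ k * Polynomial.C (∑ c : F, c ^ (m - k)) *
              ((m.choose k : ℕ) : Polynomial F) := by
      intro g _
      simp_rw [add_pow]
      rw [Finset.sum_comm]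
      refine Finset.sum_congr rfl fun k _ => ?_
      rw [← Finset.sum_mul, ← Finset.mul_sum]
      simp_rw [← Polynomial.C_pow]
      rw [← map_sum]
    rw [Finset.sum_congr rfl expand, Finset.sum_comm]
    refine Finset.sum_eq_zero fun k hk => ?_
    rcases eq_or_lt_of_le (Nat.lt_succ_iff.mp (Finset.mem_range.mp hk)) with hkm | hkm
    · -- k = m : the constant-sum factor vanishes
      have hc : (∑ c : F, c ^ (m - k)) = 0 := by
        rw [hkm, Nat.sub_self]
        simp only [pow_zero, Finset.sum_const, Finset.card_univ, nsmul_eq_mul, mul_one]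
        exact FiniteField.cast_card_eq_zero F
      rw [hc]
      simp
    · -- k < m : the inner power sum vanishes by induction
      have h0 : (∑ g ∈ MF F (i - 1), g ^ k) = 0 := by
        rw [← powerSum_eq]
        exact IH k hkm (i - 1) (by omega)
      calc (∑ g ∈ MF F (i - 1), (Polynomial.X * g) ^ k *
              Polynomial.C (∑ c : F, c ^ (m - k)) * ((m.choose k : ℕ) : Polynomial F))
          = ∑ g ∈ MF F (i - 1), g ^ k *
              (Polynomial.X ^ k * Polynomial.C (∑ c : F, c ^ (m - k)) *
                ((m.choose k : ℕ) : Polynomial F)) := by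
            refine Finset.sum_congr rfl fun g _ => ?_
            rw [mul_pow]; ring
        _ = 0 := by rw [← Finset.sum_mul, h0, zero_mul]

lemma powerSumV_eq_zero (v : Polynomial F) (hv : v.Monic) (m i : ℕ)
    (h : m + v.natDegree < i) : powerSumV F v i m = 0 := by
  classical
  set d := v.natDegree with hd
  rw [powerSumV_eq]
  have hMFV : MFV F v i = (MF F i).filter (fun n => ¬ v ∣ n) := by
    ext n
    simp only [mem_MFV, Finset.mem_filter, mem_MF]
    tauto
  have hsplit := Finset.sum_filter_add_sum_filter_not (MF F i) (fun n => v ∣ n)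
    (fun n => n ^ m)
  have htot : (∑ n ∈ MF F i, n ^ m) = 0 := by
    rw [← powerSum_eq]; exact powerSum_eq_zero F m i (by omega)
  have hdvd : (∑ n ∈ (MF F i).filter (fun n => v ∣ n), n ^ m)
      = ∑ g ∈ MF F (i - d), (v * g) ^ m := by
    refine Finset.sum_bij' (fun n _ => n / v) (fun g _ => v * g) ?_ ?_ ?_ ?_ ?_
    · intro n hn
      rw [Finset.mem_filter, mem_MF] at hn
      obtain ⟨⟨hmon, hdeg⟩, hvd⟩ := hn
      have hnv : v * (n / v) = n := EuclideanDomain.mul_div_cancel' hv.ne_zero hvd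
      have hq : (n / v).Monic := by
        have := Polynomial.leadingCoeff_mul v (n / v)
        rw [hnv, hmon.leadingCoeff, hv.leadingCoeff, one_mul] at this
        exact this.symm
      rw [mem_MF]
      refine ⟨hq, ?_⟩
      show (n / v).natDegree = i - d
      have := Polynomial.natDegree_mul hv.ne_zero hq.ne_zero
      rw [hnv, hdeg] at this
      omega
    · intro g hg
      rw [mem_MF] at hg
      obtain ⟨hmon, hdeg⟩ := hg
      rw [Finset.mem_filter, mem_MF]
      refine ⟨⟨hv.mul hmon, ?_⟩, Dvd.intro g rfl⟩
      rw [Polynomial.natDegree_mul hv.ne_zero hmon.ne_zero, hdeg]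
      omega
    · intro n hn
      rw [Finset.mem_filter] at hn
      exact EuclideanDomain.mul_div_cancel' hv.ne_zero hn.2
    · intro g hg
      rw [mem_MF] at hg
      exact mul_div_cancel_left₀ g (hv.ne_zero)
    · intro n hn
      rw [Finset.mem_filter] at hn
      rw [EuclideanDomain.mul_div_cancel' hv.ne_zero hn.2]
  have hvsum : (∑ g ∈ MF F (i - d), (v * g) ^ m) = 0 := by
    simp_rw [mul_pow]
    rw [← Finset.mul_sum, ← powerSum_eq, powerSum_eq_zero F m (i - d) (by omega), mul_zero]
  rw [hMFV]
  rw [hdvd, hvsum, htot] at hsplit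
  rw [zero_add] at hsplit
  exact hsplit

end Aux

section Aux2

variable (F : Type*) [Field F] [Fintype F]

lemma prod_sub_prod_dvd {R : Type*} [CommRing R] {ι : Type*} (s : Finset ι) (k : R)
    (f g : ι → R) (h : ∀ i ∈ s, k ∣ f i - g i) :
    k ∣ (∏ i ∈ s, f i) - ∏ i ∈ s, g i := by
  classical
  induction s using Finset.induction with
  | empty => simp
  | insert a s ha ih =>
    rw [Finset.prod_insert ha, Finset.prod_insert ha]
    have key : f a * ∏ i ∈ s, f i - g a * ∏ i ∈ s, g i
        = f a * ((∏ i ∈ s, f i) - ∏ i ∈ s, g i) + (f a - g a) * ∏ i ∈ s, g i := by ring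
    rw [key]
    exact dvd_add ((ih fun i hi => h i (Finset.mem_insert_of_mem hi)).mul_left _)
      ((h a (Finset.mem_insert_self a s)).mul_right _)

lemma pow_modulus_sub_one (v : Polynomial F) (hv : v.Monic) (hvirr : Irreducible v)
    (hd : 0 < v.natDegree) (e : ℕ) (he : 1 ≤ e) (n : Polynomial F) (hn : ¬ v ∣ n) :
    v ^ e ∣ n ^ ((Fintype.card F ^ v.natDegree - 1) *
      Fintype.card F ^ ((e - 1) * v.natDegree)) - 1 := by
  classical
  haveI := Fact.mk hvirr
  set d := v.natDegree with hdd
  set Q := Fintype.card F ^ d with hQ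
  set P := Fintype.card F ^ ((e - 1) * d) with hP
  -- Step 1: v ∣ n ^ (Q - 1) - 1
  have hstep1 : v ∣ n ^ (Q - 1) - 1 := by
    letI : Fintype (AdjoinRoot v) :=
      Module.fintypeOfFintype (AdjoinRoot.powerBasisAux hv.ne_zero)
    have hcard : Fintype.card (AdjoinRoot v) = Q := by
      rw [Module.card_fintype (AdjoinRoot.powerBasisAux hv.ne_zero), Fintype.card_fin, hQ]
    have hx : AdjoinRoot.mk v n ≠ 0 := by
      rw [Ne, AdjoinRoot.mk_eq_zero]
      exact hn
    have hpow : (AdjoinRoot.mk v n) ^ (Q - 1) = 1 := by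
      rw [← hcard]
      exact FiniteField.pow_card_sub_one_eq_one _ hx
    rw [← AdjoinRoot.mk_eq_zero (f := v)]
    rw [map_sub, map_pow, map_one, hpow, sub_self]
  -- Step 2: characteristic p Frobenius
  obtain ⟨w, hw⟩ := hstep1
  set p := ringChar F with hp
  haveI : CharP F p := ringChar.charP F
  haveI hfp : Fact p.Prime := Fact.mk (CharP.char_is_prime F p)
  haveI : CharP (Polynomial F) p :=
    charP_of_injective_ringHom (Polynomial.C_injective (R := F)) p
  obtain ⟨f, hpprime, hcardF⟩ := FiniteField.card F p
  have hPp : P = p ^ ((f : ℕ) * ((e - 1) * d)) := by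
    rw [hP, hcardF, ← pow_mul]
  have hkey : n ^ ((Q - 1) * P) - 1 = (v * w) ^ P := by
    have : n ^ (Q - 1) = 1 + v * w := by rw [← hw]; ring
    rw [pow_mul, this, hPp, add_pow_char_pow]
    rw [one_pow]
    ring
  rw [hkey]
  have heP : e ≤ P := by
    have h2 : 2 ≤ Fintype.card F := Fintype.one_lt_card
    calc e ≤ 2 ^ (e - 1) := by
            have := @Nat.lt_two_pow_self (e - 1)
            omega
      _ ≤ Fintype.card F ^ (e - 1) := Nat.pow_le_pow_left h2 _
      _ ≤ Fintype.card F ^ ((e - 1) * d) := Nat.pow_le_pow_right (by omega)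
            (Nat.le_mul_of_pos_right _ hd)
      _ = P := rfl
  rw [mul_pow]
  exact Dvd.dvd.mul_right (pow_dvd_pow v heP) _

lemma pow_congr_of_modEq (v : Polynomial F) (hv : v.Monic) (hvirr : Irreducible v)
    (hd : 0 < v.natDegree) (e : ℕ) (he : 1 ≤ e) (m l : ℕ)
    (hml : m ≡ l [MOD (Fintype.card F ^ v.natDegree - 1) *
      Fintype.card F ^ ((e - 1) * v.natDegree)])
    (n : Polynomial F) (hn : ¬ v ∣ n) :
    v ^ e ∣ n ^ m - n ^ l := by
  set N := (Fintype.card F ^ v.natDegree - 1) *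
      Fintype.card F ^ ((e - 1) * v.natDegree) with hN
  have main : ∀ a b : ℕ, b ≤ a → a ≡ b [MOD N] → v ^ e ∣ n ^ a - n ^ b := by
    intro a b hba hab
    obtain ⟨k, hk⟩ := (Nat.modEq_iff_dvd' hba).mp hab.symm
    have ha : a = b + N * k := by omega
    have : n ^ a - n ^ b = n ^ b * ((n ^ N) ^ k - 1) := by
      rw [ha, pow_add, pow_mul]
      ring
    rw [this]
    refine Dvd.dvd.mul_left ?_ _
    have h1 : v ^ e ∣ n ^ N - 1 := pow_modulus_sub_one F v hv hvirr hd e he n hn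
    have h2 : n ^ N - 1 ∣ (n ^ N) ^ k - 1 := by
      have := sub_dvd_pow_sub_pow (n ^ N) 1 k
      rwa [one_pow] at this
    exact h1.trans h2
  rcases le_total l m with hlm | hml'
  · exact main m l hlm hml
  · have := main l m hml' hml.symm
    rw [← dvd_sub_comm] at this
    exact this

lemma powerSumV_sub_dvd (v : Polynomial F) (hv : v.Monic) (hvirr : Irreducible v)
    (hd : 0 < v.natDegree) (e : ℕ) (he : 1 ≤ e) (i m l : ℕ)
    (hml : m ≡ l [MOD (Fintype.card F ^ v.natDegree - 1) *
      Fintype.card F ^ ((e - 1) * v.natDegree)]) :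
    v ^ e ∣ powerSumV F v i m - powerSumV F v i l := by
  rw [powerSumV_eq, powerSumV_eq, ← Finset.sum_sub_distrib]
  refine Finset.dvd_sum fun n hn => ?_
  exact pow_congr_of_modEq F v hv hvirr hd e he m l hml n ((mem_MFV F).mp hn).2.2

end Aux2

/-- Kummer-type congruence for v-adic multiple zeta star values:
if `m_i ≡ l_i mod (q^d - 1)·q^{(e-1)d}` for all `1 ≤ i ≤ r`, then
`v^e ∣ ζ⋆_v(-m_1, …, -m_r) - ζ⋆_v(-l_1, …, -l_r)`. -/
theorem zetaVStar_kummer (F : Type*) [Field F] [Fintype F] (v : Polynomial F)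
    (hv : v.Monic) (hvirr : Irreducible v) (hd : 0 < v.natDegree)
    (e r : ℕ) (he : 1 ≤ e) (hr : 1 ≤ r) (m l : ℕ → ℕ)
    (h : ∀ i < r, m i ≡ l i
      [MOD (Fintype.card F ^ v.natDegree - 1) *
        Fintype.card F ^ ((e - 1) * v.natDegree)]) :
    v ^ e ∣ zetaVStar F v r m - zetaVStar F v r l := by
  classical
  let B : Fin r → ℕ := fun j => max (m (j : ℕ)) (l (j : ℕ)) + v.natDegree
  let t : Finset (Fin r → ℕ) :=
    (Fintype.piFinset fun j => Finset.range (B j + 1)).filter (fun i => Antitone i)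
  have key : ∀ m' : ℕ → ℕ, (∀ j : Fin r, m' (j : ℕ) ≤ max (m (j : ℕ)) (l (j : ℕ))) →
      zetaVStar F v r m' = ∑ i ∈ t, ∏ j : Fin r, powerSumV F v (i j) (m' (j : ℕ)) := by
    intro m' hm'
    rw [zetaVStar]
    apply finsum_mem_eq_sum_of_inter_support_eq
    ext i
    simp only [Set.mem_inter_iff, Set.mem_setOf_eq, Function.mem_support, t,
      Finset.coe_filter, Fintype.mem_piFinset, Finset.mem_range]
    constructor
    · rintro ⟨ha, hne⟩
      refine ⟨⟨fun j => ?_, ha⟩, hne⟩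
      by_contra hij
      apply hne
      refine Finset.prod_eq_zero (Finset.mem_univ j) ?_
      refine powerSumV_eq_zero F v hv _ _ ?_
      have h1 := hm' j
      simp only [B] at hij
      omega
    · rintro ⟨⟨_, ha⟩, hne⟩
      exact ⟨ha, hne⟩
  rw [key m (fun j => le_max_left _ _), key l (fun j => le_max_right _ _),
    ← Finset.sum_sub_distrib]
  refine Finset.dvd_sum fun i hi => ?_
  refine prod_sub_prod_dvd _ _ _ _ fun j _ => ?_
  exact powerSumV_sub_dvd F v hv hvirr hd e he (i j) (m (j : ℕ)) (l (j : ℕ))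
    (h (j : ℕ) j.isLt)
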